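/- Let Γ be a linearly ordered abelian group, p a prime number, and γ ∈ Γ with γ > 0. If every y ∈ Γ with 0 ≤ y ≤ γ is p-divisible in Γ (i.e. there exists z ∈ Γ with p·z = y), then the smallest convex subgroup Γ_{γ+} of Γ containing γ is a p-divisible subgroup (for every h ∈ Γ_{γ+} there exists h' ∈ Γ_{γ+} with p·h' = h). -/

import Mathlib

/-- A convex subgroup of a linearly ordered abelian group: a subgroup `H` such that
whenever `h ∈ H` and `0 ≤ x ≤ h`, then `x ∈ H`. -/
def IsConvexSubgroup {Γ : Type*} [AddCommGroup Γ] [LinearOrder Γ] [IsOrderedAddMonoid Γ] (H : AddSubgroup Γ) : Prop :=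
  ∀ h ∈ H, ∀ x : Γ, 0 ≤ x → x ≤ h → x ∈ H

/-- Let `Γ` be a linearly ordered abelian group, `p` a prime, and `γ ∈ Γ` with `γ > 0`.
If every `y` with `0 ≤ y ≤ γ` is `p`-divisible in `Γ`, then the smallest convex
subgroup `Γ_{γ+}` of `Γ` containing `γ` is `p`-divisible. -/
theorem pDivisible_of_interval_pDivisible
    {Γ : Type*} [AddCommGroup Γ] [LinearOrder Γ] [IsOrderedAddMonoid Γ] (p : ℕ) (hp : p.Prime)
    (γ : Γ) (hγ : 0 < γ)
    (hdiv : ∀ y : Γ, 0 ≤ y → y ≤ γ → ∃ z : Γ, p • z = y)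
    (Δp : AddSubgroup Γ) (hconv : IsConvexSubgroup Δp) (hmem : γ ∈ Δp)
    (hmin : ∀ H : AddSubgroup Γ, IsConvexSubgroup H → γ ∈ H → Δp ≤ H) :
    ∀ h ∈ Δp, ∃ h' ∈ Δp, p • h' = h := by
  have hp0 : 0 < p := hp.pos
  -- key claim: every y in [0, n•γ] has a p-th "quotient" in [0, n•γ]
  have key : ∀ n : ℕ, ∀ y : Γ, 0 ≤ y → y ≤ n • γ → ∃ z : Γ, 0 ≤ z ∧ z ≤ n • γ ∧ p • z = y := by
    intro n
    induction n with
    | zero =>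
      intro y hy0 hy1
      simp only [zero_smul] at hy1
      exact ⟨0, le_refl 0, by simp, by simp [le_antisymm hy1 hy0]⟩
    | succ n ih =>
      intro y hy0 hy1
      by_cases hcase : y ≤ n • γ
      · obtain ⟨z, hz0, hz1, hz2⟩ := ih y hy0 hcase
        exact ⟨z, hz0, le_trans hz1 (by
          rw [succ_nsmul]; exact le_add_of_nonneg_right hγ.le), hz2⟩
      · push_neg at hcase
        obtain ⟨z0, hz00, hz01, hz02⟩ := ih (n • γ) (nsmul_nonneg hγ.le n) le_rfl
        obtain ⟨z1, hz12⟩ := hdiv (y - n • γ) (sub_nonneg.mpr hcase.le)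
          (by rw [sub_le_iff_le_add', ← succ_nsmul]; exact hy1)
        have hz10 : 0 ≤ z1 := by
          by_contra hneg
          push_neg at hneg
          have h1 : (1 : ℕ) • (-z1) ≤ p • (-z1) :=
            nsmul_le_nsmul_left (neg_nonneg.mpr hneg.le) hp.one_lt.le
          rw [one_smul, smul_neg, hz12] at h1
          have : y - n • γ ≤ z1 := neg_le_neg_iff.mp h1
          exact absurd (sub_nonneg.mpr hcase.le) (not_le.mpr (lt_of_le_of_lt this hneg))
        have hz11 : z1 ≤ γ := by
          by_contra hgt
          push_neg at hgt
          have h1 : (1 : ℕ) • z1 ≤ p • z1 := nsmul_le_nsmul_left hz10 hp.one_lt.le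
          rw [one_smul, hz12] at h1
          have h2 : y - n • γ ≤ γ := by
            rw [sub_le_iff_le_add', ← succ_nsmul]; exact hy1
          exact absurd (lt_of_lt_of_le hgt h1) (not_lt.mpr h2)
        refine ⟨z0 + z1, add_nonneg hz00 hz10, ?_, ?_⟩
        · rw [succ_nsmul]; exact add_le_add hz01 hz11
        · rw [smul_add, hz02, hz12]; abel
  -- the subgroup of elements bounded by multiples of γ
  let H : AddSubgroup Γ :=
    { carrier := {x | ∃ n : ℕ, |x| ≤ n • γ}
      zero_mem' := ⟨0, by simp⟩
      add_mem' := by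
        rintro a b ⟨n, hn⟩ ⟨m, hm⟩
        exact ⟨n + m, le_trans (abs_add_le a b) (by rw [add_nsmul]; exact add_le_add hn hm)⟩
      neg_mem' := by
        rintro a ⟨n, hn⟩
        exact ⟨n, by rwa [abs_neg]⟩ }
  have hHconv : IsConvexSubgroup H := by
    rintro h ⟨n, hn⟩ x hx0 hxh
    exact ⟨n, by rw [abs_of_nonneg hx0]; exact le_trans hxh (le_trans (le_abs_self h) hn)⟩
  have hHγ : γ ∈ H := ⟨1, by simp [abs_of_nonneg hγ.le]⟩
  have hsub := hmin H hHconv hHγ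
  -- now prove the goal
  intro h hh
  obtain ⟨n, hn⟩ := hsub hh
  have hnγ : n • γ ∈ Δp := AddSubgroup.nsmul_mem Δp hmem n
  rcases le_or_gt 0 h with hpos | hneg
  · obtain ⟨z, hz0, hz1, hz2⟩ := key n h hpos (le_trans (le_abs_self h) hn)
    exact ⟨z, hconv _ hnγ z hz0 hz1, hz2⟩
  · obtain ⟨z, hz0, hz1, hz2⟩ := key n (-h) (neg_nonneg.mpr hneg.le)
      (le_trans (neg_le_abs h) hn)
    refine ⟨-z, AddSubgroup.neg_mem Δp (hconv _ hnγ z hz0 hz1), ?_⟩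
    rw [smul_neg, hz2, neg_neg]
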